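/- The determinant of the (d+1)×(d+1) matrix M_k with diagonal entries k_i+1, superdiagonal entries -k_{i+1} (for i=1,...,d), entry -k_1 in position (d+1,1), and zeros elsewhere, equals ∏_{i=1}^{d+1}(k_i+1) - ∏_{i=1}^{d+1} k_i. -/

import Mathlib

/-- The matrix `M_k`: diagonal entries `k i + 1`, cyclic superdiagonal entries
`-(k (i+1))` (including the bottom-left corner entry `-k 1`), zeros elsewhere. -/
def heawoodMatrix (d : ℕ) (k : Fin (d + 1) → ℤ) :
    Matrix (Fin (d + 1)) (Fin (d + 1)) ℤ :=
  Matrix.of fun i j => if j = i then k i + 1 else if j = i + 1 then -k (i + 1) else 0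

theorem det_heawoodMatrix (d : ℕ) (hd : 1 ≤ d) (k : Fin (d + 1) → ℤ)
    (hk : ∀ i, 0 < k i) :
    (heawoodMatrix d k).det = (∏ i, (k i + 1)) - ∏ i, k i := by
  obtain ⟨m, rfl⟩ : ∃ m, d = m + 1 := ⟨d - 1, by omega⟩
  have h10 : (1 : Fin (m + 2)) ≠ 0 := by
    simp [Fin.ext_iff]
  have hne : ∀ i : Fin (m + 2), i - 1 ≠ i := by
    intro i h
    exact h10 (sub_eq_self.mp h)
  set c : Equiv.Perm (Fin (m + 2)) := (finRotate (m + 2))⁻¹ with hc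
  have hc_apply : ∀ i, c i = i - 1 := by
    intro i
    rw [hc, Equiv.Perm.inv_def, Equiv.symm_apply_eq, finRotate_succ_apply,
      sub_add_cancel]
  -- classification of contributing permutations
  have key : ∀ σ : Equiv.Perm (Fin (m + 2)),
      (∀ i, σ i = i ∨ σ i = i - 1) → σ = 1 ∨ σ = c := by
    intro σ hσ
    by_cases hall : ∀ i, σ i = i
    · exact Or.inl (Equiv.ext hall)
    · push_neg at hall
      obtain ⟨i₀, hi₀⟩ := hall
      have hi₀' : σ i₀ = i₀ - 1 := (hσ i₀).resolve_left hi₀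
      have step : ∀ a : Fin (m + 2), σ a = a - 1 → σ (a - 1) = a - 1 - 1 := by
        intro a ha
        rcases hσ (a - 1) with h | h
        · exfalso
          have : a - 1 = a := σ.injective (by rw [ha, h])
          exact hne a this
        · exact h
      open Fin.NatCast in
      have claim : ∀ t : ℕ, σ (i₀ - (t : Fin (m + 2))) = i₀ - (t : Fin (m + 2)) - 1 := by
        intro t
        induction t with
        | zero => simpa using hi₀'
        | succ t ih =>
          have : i₀ - ((t + 1 : ℕ) : Fin (m + 2)) = i₀ - (t : Fin (m + 2)) - 1 := by
            push_cast
            rw [sub_add_eq_sub_sub]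
          rw [this]
          exact step _ ih
      refine Or.inr (Equiv.ext fun j => ?_)
      have := claim ((i₀ - j : Fin (m + 2)).val)
      rw [Fin.cast_val_eq_self, sub_sub_cancel] at this
      rw [this, hc_apply]
  have h1c : (1 : Equiv.Perm (Fin (m + 2))) ≠ c := by
    intro h
    have := hc_apply 0
    rw [← h] at this
    simp only [Equiv.Perm.coe_one, id_eq] at this
    exact hne 0 this.symm
  rw [Matrix.det_apply]
  rw [← Finset.sum_subset (Finset.subset_univ ({1, c} : Finset (Equiv.Perm (Fin (m + 2)))))]
  · rw [Finset.sum_pair h1c]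
    have t1 : (∏ i : Fin (m + 2), heawoodMatrix (m + 1) k ((1 : Equiv.Perm (Fin (m + 2))) i) i)
        = ∏ i : Fin (m + 2), (k i + 1) := by
      refine Finset.prod_congr rfl fun i _ => ?_
      simp [heawoodMatrix]
    have t2 : ∀ i : Fin (m + 2), heawoodMatrix (m + 1) k (c i) i = -k i := by
      intro i
      rw [hc_apply]
      simp only [heawoodMatrix, Matrix.of_apply]
      rw [if_neg (hne i).symm, if_pos (by rw [sub_add_cancel]), sub_add_cancel]
    have s1 : Equiv.Perm.sign (1 : Equiv.Perm (Fin (m + 2))) = 1 := by simp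
    have t2' : (∏ i : Fin (m + 2), heawoodMatrix (m + 1) k (c i) i)
        = (-1 : ℤ) ^ (m + 2) * ∏ i : Fin (m + 2), k i := by
      rw [Finset.prod_congr rfl (fun i _ => t2 i),
        Finset.prod_congr rfl (fun (i : Fin (m + 2)) _ => (neg_one_mul (k i)).symm),
        Finset.prod_mul_distrib, Finset.prod_const]
      simp
    have hfin : (Equiv.Perm.sign c) • ((-1 : ℤ) ^ (m + 2) * ∏ i : Fin (m + 2), k i)
        = -∏ i : Fin (m + 2), k i := by
      rw [hc, Equiv.Perm.sign_inv, sign_finRotate, Units.smul_def]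
      push_cast
      rw [smul_eq_mul, ← mul_assoc, ← pow_add]
      rw [show (-1 : ℤ) ^ (m + 1 + (m + 2)) = -1 from Odd.neg_one_pow ⟨m + 1, by ring⟩]
      ring
    rw [s1, t1, t2', one_smul, hfin]
    ring
  · intro σ _ hσ
    simp only [Finset.mem_insert, Finset.mem_singleton] at hσ
    push_neg at hσ
    have : ¬ ∀ i, σ i = i ∨ σ i = i - 1 := fun h => by
      rcases key σ h with h | h
      · exact hσ.1 h
      · exact hσ.2 h
    push_neg at this
    obtain ⟨i, hi1, hi2⟩ := this
    have hz : heawoodMatrix (m + 1) k (σ i) i = 0 := by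
      simp only [heawoodMatrix, Matrix.of_apply]
      rw [if_neg, if_neg]
      · intro h
        exact hi2 (by rw [eq_sub_iff_add_eq]; exact h.symm)
      · intro h; exact hi1 h.symm
    have hz0 : (∏ j : Fin (m + 2), heawoodMatrix (m + 1) k (σ j) j) = 0 :=
      Finset.prod_eq_zero (Finset.mem_univ i) hz
    rw [hz0, smul_zero]
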